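/- Let a_max > 0, V_max > 0 and 0 < d ≤ V_max²/a_max, and set T = 2·√(d/a_max). Then there exists a differentiable function q : ℝ → ℝ such that q(0) = 0, q(T) = d, q′(0) = 0, q′(T) = 0, |q′(t)| ≤ V_max for all t ∈ [0, T], and q′ is Lipschitz on [0, T] with Lipschitz constant a_max. -/

import Mathlib

lemma relu_sq_hasDerivAt (x : ℝ) :
    HasDerivAt (fun y : ℝ => max y 0 ^ 2) (2 * max x 0) x := by
  rcases lt_trichotomy x 0 with hx | hx | hx
  · have h : (fun y : ℝ => max y 0 ^ 2) =ᶠ[nhds x] fun _ => (0 : ℝ) := by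
      filter_upwards [eventually_lt_nhds hx] with y hy
      simp [max_eq_right hy.le]
    have h2 := (hasDerivAt_const x (0 : ℝ)).congr_of_eventuallyEq h
    rw [max_eq_right hx.le, mul_zero]
    exact h2
  · subst hx
    rw [hasDerivAt_iff_isLittleO, Asymptotics.isLittleO_iff]
    intro ε hε
    filter_upwards [Metric.ball_mem_nhds (0:ℝ) hε] with y hy
    simp only [Metric.mem_ball, Real.dist_eq, sub_zero] at hy
    have h1 : max y 0 ^ 2 ≤ |y| * |y| := by
      rcases le_or_gt y 0 with h | h
      · rw [max_eq_right h]
        have := mul_nonneg (abs_nonneg y) (abs_nonneg y)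
        nlinarith
      · rw [max_eq_left h.le, abs_of_pos h, ← sq]
    have h0 : (0:ℝ) ≤ max y 0 ^ 2 := by positivity
    have : ‖max y 0 ^ 2 - max (0:ℝ) 0 ^ 2 - (y - 0) • (2 * max (0:ℝ) 0)‖ = max y 0 ^ 2 := by
      simp [abs_of_nonneg h0]
    rw [this]
    simp only [sub_zero, Real.norm_eq_abs]
    nlinarith [abs_nonneg y]
  · have h : (fun y : ℝ => max y 0 ^ 2) =ᶠ[nhds x] fun y => y ^ 2 := by
      filter_upwards [eventually_gt_nhds hx] with y hy
      simp [max_eq_left hy.le]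
    have hp : HasDerivAt (fun y : ℝ => y ^ 2) (2 * x) x := by
      simpa using (hasDerivAt_pow 2 x)
    have h2 := hp.congr_of_eventuallyEq h
    rw [max_eq_left hx.le]
    exact h2

theorem stmt_16 (a_max V_max d : ℝ) (ha : 0 < a_max) (hV : 0 < V_max)
    (hd : 0 < d) (hd2 : d ≤ V_max ^ 2 / a_max) :
    ∃ q : ℝ → ℝ, Differentiable ℝ q ∧
      q 0 = 0 ∧ q (2 * Real.sqrt (d / a_max)) = d ∧
      deriv q 0 = 0 ∧ deriv q (2 * Real.sqrt (d / a_max)) = 0 ∧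
      (∀ t ∈ Set.Icc (0 : ℝ) (2 * Real.sqrt (d / a_max)), |deriv q t| ≤ V_max) ∧
      (∀ s ∈ Set.Icc (0 : ℝ) (2 * Real.sqrt (d / a_max)),
        ∀ t ∈ Set.Icc (0 : ℝ) (2 * Real.sqrt (d / a_max)),
          |deriv q s - deriv q t| ≤ a_max * |s - t|) := by
  set m := Real.sqrt (d / a_max) with hm
  have hda : 0 < d / a_max := div_pos hd ha
  have hm0 : 0 < m := Real.sqrt_pos.mpr hda
  have hm2 : m ^ 2 = d / a_max := Real.sq_sqrt hda.le
  have hamd : a_max * m ^ 2 = d := by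
    rw [hm2]; field_simp
  set q : ℝ → ℝ := fun t => a_max / 2 * t ^ 2 - a_max * max (t - m) 0 ^ 2 with hq
  have hderiv : ∀ t, HasDerivAt q (a_max * (m - |t - m|)) t := by
    intro t
    have h1 : HasDerivAt (fun t : ℝ => a_max / 2 * t ^ 2) (a_max / 2 * (2 * t)) t := by
      simpa using (hasDerivAt_pow 2 t).const_mul (a_max / 2)
    have h2 : HasDerivAt (fun t : ℝ => a_max * max (t - m) 0 ^ 2)
        (a_max * (2 * max (t - m) 0)) t := by
      have := (relu_sq_hasDerivAt (t - m)).comp t ((hasDerivAt_id t).sub_const m)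
      simpa using this.const_mul a_max
    have h3 := h1.sub h2
    have heq : a_max / 2 * (2 * t) - a_max * (2 * max (t - m) 0)
        = a_max * (m - |t - m|) := by
      rcases le_or_gt t m with h | h
      · rw [max_eq_right (by linarith), abs_of_nonpos (by linarith)]; ring
      · rw [max_eq_left (by linarith), abs_of_pos (by linarith)]; ring
    rw [heq] at h3
    exact h3
  have hdq : ∀ t, deriv q t = a_max * (m - |t - m|) := fun t => (hderiv t).deriv
  refine ⟨q, fun t => (hderiv t).differentiableAt, ?_, ?_, ?_, ?_, ?_, ?_⟩
  · show q 0 = 0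
    simp only [hq]
    rw [max_eq_right (by linarith : (0:ℝ) - m ≤ 0)]
    ring
  · show q (2 * m) = d
    simp only [hq]
    rw [max_eq_left (by linarith : (0:ℝ) ≤ 2 * m - m)]
    nlinarith [hamd]
  · rw [hdq]; rw [abs_of_nonpos (by linarith : (0:ℝ) - m ≤ 0)]; ring_nf
  · rw [hdq]; rw [abs_of_nonneg (by linarith : (0:ℝ) ≤ 2 * m - m)]; ring_nf
  · intro t ht
    obtain ⟨ht0, ht1⟩ := ht
    rw [hdq]
    have hb : |t - m| ≤ m := abs_le.mpr ⟨by linarith, by linarith⟩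
    have hba : (0:ℝ) ≤ |t - m| := abs_nonneg _
    have h1 : |a_max * (m - |t - m|)| ≤ a_max * m := by
      rw [abs_mul, abs_of_pos ha]
      have hc : abs (m - |t - m|) ≤ m := abs_le.mpr ⟨by linarith, by linarith⟩
      exact mul_le_mul_of_nonneg_left hc ha.le
    have h2 : a_max * m ≤ V_max := by
      have had : a_max * d ≤ V_max ^ 2 := by
        have := (le_div_iff₀ ha).mp hd2
        linarith
      have hsq : (a_max * m) ^ 2 ≤ V_max ^ 2 := by
        have he : (a_max * m) ^ 2 = a_max * d := by
          rw [mul_pow, hm2]; field_simp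
        rw [he]; exact had
      nlinarith [mul_pos ha hm0]
    linarith
  · intro s _ t _
    rw [hdq, hdq]
    have he : a_max * (m - |s - m|) - a_max * (m - |t - m|)
        = a_max * (|t - m| - |s - m|) := by ring
    rw [he, abs_mul, abs_of_pos ha]
    refine mul_le_mul_of_nonneg_left ?_ ha.le
    have h3 := abs_abs_sub_abs_le_abs_sub (t - m) (s - m)
    have h4 : t - m - (s - m) = -(s - t) := by ring
    rw [h4, abs_neg] at h3
    exact h3
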